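/- arXiv:1408.3454 — 7 statements merged into one kernel-verified Lean document; each statement's English description precedes it below -/
import Mathlib

section
/- If exactly two of the three starting values of an M&m sequence are equal (say a = b < c), then the M&m sequence becomes stable after at most five iterations: there exists k ≤ 9 such that x_n = x_k for all n ≥ k. -/
open Finset Filter

/-- The median of a finite list of reals: the middle element of the sorted list
if the length is odd, and the average of the two middle elements if it is even. -/
noncomputable def med (l : List ℝ) : ℝ :=
  let s := l.insertionSort (· ≤ ·)
  if l.length % 2 = 1 then s.getD (l.length / 2) 0
  else (s.getD (l.length / 2 - 1) 0 + s.getD (l.length / 2) 0) / 2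

/-- The list of the first `n` terms `X 1, …, X n`. -/
def firstTerms (X : ℕ → ℝ) (n : ℕ) : List ℝ := (List.range' 1 n).map X

/-- The median `m_n` of the first `n` terms. -/
noncomputable def medn (X : ℕ → ℝ) (n : ℕ) : ℝ := med (firstTerms X n)

/-- `X` is the M&m sequence generated from the starting triple `(a, b, c)`:
`x_n = n · med(x_1,…,x_{n-1}) − (x_1 + ⋯ + x_{n-1})` for `n ≥ 4`. -/
def IsMnM (a b c : ℝ) (X : ℕ → ℝ) : Prop :=
  X 1 = a ∧ X 2 = b ∧ X 3 = c ∧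
  ∀ n, 4 ≤ n → X n = n * medn X (n - 1) - ∑ j ∈ Finset.Icc 1 (n - 1), X j

lemma insertionSort_eq_of_perm {l l' : List ℝ} (hp : l.Perm l') (hs : l'.Pairwise (· ≤ ·)) :
    l.insertionSort (· ≤ ·) = l' :=
  List.Perm.eq_of_pairwise' (List.pairwise_insertionSort _ l) hs
    ((List.perm_insertionSort _ l).trans hp)

open List in
lemma mnm_med_eq (a c : ℝ) (hac : a < c) (X : ℕ → ℝ) (m : ℕ) (hm : 4 ≤ m)
    (h1 : X 1 = a) (h2 : X 2 = a) (h3 : X 3 = c) (h4 : X 4 = 2 * a - c)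
    (ha : ∀ j, 5 ≤ j → j ≤ m → X j = a) : medn X m = a := by
  have hle : a ≤ c := le_of_lt hac
  -- the list of first terms
  have hft : firstTerms X m = [a, a, c, 2 * a - c] ++ List.replicate (m - 4) a := by
    have hr : List.range' 1 m = List.range' 1 4 ++ List.range' 5 (m - 4) := by
      rw [List.range'_append (s := 1) (m := 4) (n := m - 4) (step := 1)]
      congr 1
      omega
    have htail : (List.range' 5 (m - 4)).map X = List.replicate (m - 4) a := by
      rw [List.eq_replicate_iff]
      refine ⟨by simp, ?_⟩
      intro b hb
      simp only [List.mem_map] at hb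
      obtain ⟨j, hj, rfl⟩ := hb
      rw [List.mem_range'_1] at hj
      exact ha j hj.1 (by omega)
    have : (List.range' 5 (m - 4)).map X = List.replicate (m - 4) a := htail
    rw [firstTerms, hr, List.map_append, this]
    simp [List.range'_succ, h1, h2, h3, h4]
  -- the sorted version
  set S : List ℝ := (2 * a - c) :: (List.replicate (m - 2) a ++ [c]) with hS
  have hrep : List.replicate (m - 2) a = a :: a :: List.replicate (m - 4) a := by
    have : m - 2 = (m - 4) + 1 + 1 := by omega
    rw [this, List.replicate_succ, List.replicate_succ]
  have hperm : (firstTerms X m).Perm S := by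
    rw [hft, hS, hrep]
    calc ([a, a, c, 2 * a - c] ++ List.replicate (m - 4) a : List ℝ)
        = [a, a, c] ++ (2 * a - c) :: List.replicate (m - 4) a := by simp
      _ ~ (2 * a - c) :: ([a, a, c] ++ List.replicate (m - 4) a) := List.perm_middle
      _ = (2 * a - c) :: a :: a :: (c :: List.replicate (m - 4) a) := by simp
      _ ~ (2 * a - c) :: a :: a :: (List.replicate (m - 4) a ++ [c]) := by
          refine List.Perm.cons _ (List.Perm.cons _ (List.Perm.cons _ ?_))
          have := (List.perm_middle (a := c) (l₁ := List.replicate (m - 4) a) (l₂ := []))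
          simpa using this.symm
      _ = (2 * a - c) :: ((a :: a :: List.replicate (m - 4) a) ++ [c]) := by simp
  have hsorted : S.Pairwise (· ≤ ·) := by
    rw [hS]
    rw [List.pairwise_cons]
    constructor
    · intro b hb
      rcases List.mem_append.mp hb with hb | hb
      · rw [List.eq_of_mem_replicate hb]; linarith
      · simp only [List.mem_singleton] at hb; subst hb; linarith
    · show List.Pairwise _ _
      rw [List.pairwise_append]
      refine ⟨?_, by simp, ?_⟩
      · exact List.pairwise_replicate.mpr (Or.inr le_rfl)
      · intro x hx y hy
        rw [List.eq_of_mem_replicate hx]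
        simp only [List.mem_singleton] at hy; subst hy; exact hle
  have hsort : (firstTerms X m).insertionSort (· ≤ ·) = S :=
    insertionSort_eq_of_perm hperm hsorted
  have hlen : (firstTerms X m).length = m := by
    simp [firstTerms]
  -- getD at interior indices is a
  have hgetD : ∀ i, 1 ≤ i → i ≤ m - 2 → S.getD i 0 = a := by
    intro i hi1 hi2
    obtain ⟨j, rfl⟩ : ∃ j, i = j + 1 := ⟨i - 1, by omega⟩
    have : S.getD (j + 1) 0 = (List.replicate (m - 2) a ++ [c]).getD j 0 := by
      simp [hS]
    rw [this, List.getD_append _ _ _ _ (by simp; omega)]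
    rw [List.getD_eq_getElem?_getD, List.getElem?_replicate, if_pos (by omega)]
    rfl
  rw [medn, med]
  simp only [hsort, hlen]
  by_cases hpar : m % 2 = 1
  · rw [if_pos hpar]
    exact hgetD _ (by omega) (by omega)
  · rw [if_neg hpar]
    rw [hgetD _ (by omega) (by omega), hgetD _ (by omega) (by omega)]
    ring

theorem mnm_stable_of_two_equal (a c : ℝ) (hac : a < c) (X : ℕ → ℝ)
    (h : IsMnM a a c X) :
    ∃ k, k ≤ 9 ∧ ∀ n, k ≤ n → X n = X k := by
  obtain ⟨h1, h2, h3, hrec⟩ := h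
  have hle : a ≤ c := le_of_lt hac
  -- X 4 = 2a - c
  have hmed3 : medn X 3 = a := by
    have hft : firstTerms X 3 = [a, a, c] := by
      simp [firstTerms, List.range'_succ, h1, h2, h3]
    rw [medn, hft, med]
    norm_num [List.insertionSort, List.orderedInsert, hle]
  have h4 : X 4 = 2 * a - c := by
    have := hrec 4 (le_refl 4)
    norm_num at this
    rw [hmed3] at this
    have hIcc : Finset.Icc 1 3 = ({1, 2, 3} : Finset ℕ) := by decide
    rw [hIcc] at this
    rw [this]
    simp [Finset.sum_insert, h1, h2, h3]
    ring
  -- sums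
  have hsum : ∀ m, 4 ≤ m → (∀ j, 5 ≤ j → j ≤ m → X j = a) →
      ∑ j ∈ Finset.Icc 1 m, X j = m * a := by
    intro m hm
    induction m, hm using Nat.le_induction with
    | base =>
      intro _
      have hIcc : Finset.Icc 1 4 = ({1, 2, 3, 4} : Finset ℕ) := by decide
      rw [hIcc]
      simp [Finset.sum_insert, h1, h2, h3, h4]
      ring
    | succ m hm ih =>
      intro ha
      rw [Finset.sum_Icc_succ_top (by omega)]
      rw [ih (fun j hj hj' => ha j hj (by omega)), ha (m + 1) (by omega) le_rfl]
      push_cast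
      ring
  -- X n = a for n ≥ 5 by strong induction
  have key : ∀ n, 5 ≤ n → X n = a := by
    intro n
    induction n using Nat.strong_induction_on with
    | _ n ih =>
      intro hn
      have hall : ∀ j, 5 ≤ j → j ≤ n - 1 → X j = a := fun j hj hj' =>
        ih j (by omega) hj
      have hmed : medn X (n - 1) = a :=
        mnm_med_eq a c hac X (n - 1) (by omega) h1 h2 h3 h4 hall
      have hs : ∑ j ∈ Finset.Icc 1 (n - 1), X j = (n - 1 : ℕ) * a :=
        hsum (n - 1) (by omega) hall
      rw [hrec n (by omega), hmed, hs]
      have : ((n - 1 : ℕ) : ℝ) = (n : ℝ) - 1 := by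
        have : 1 ≤ n := by omega
        push_cast [this]
        ring
      rw [this]
      ring
  refine ⟨5, by norm_num, fun n hn => ?_⟩
  rw [key n hn, key 5 le_rfl]
end

section
/- The sequence of medians (m_n)_{n≥4} associated to an M&m sequence started from (0, x, 1) with 0 < x < 1 is monotone: either m_{n+1} ≥ m_n for all n ≥ 4, or m_{n+1} ≤ m_n for all n ≥ 4. In fact m_{n+1} ≥ m_n whenever x_{n+1} ≥ m_n and m_{n+1} ≤ m_n whenever x_{n+1} ≤ m_n. -/
open Finset Filter

lemma countP_lt_le {s : List ℝ} (hs : s.Pairwise (· ≤ ·)) {m : ℝ} {k : ℕ}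
    (hk : k < s.length) (h : m ≤ s[k]) :
    s.countP (fun a => decide (a < m)) ≤ k := by
  have hd : (s.drop k).countP (fun a => decide (a < m)) = 0 := by
    rw [List.countP_eq_zero]
    intro a ha
    obtain ⟨j, hj, rfl⟩ := List.getElem_of_mem ha
    simp only [decide_eq_true_eq, List.getElem_drop, not_lt]
    refine le_trans h ?_
    have := hs.rel_get_of_le (a := ⟨k, hk⟩)
      (b := ⟨k + j, by have := hj; simp [List.length_drop] at this; omega⟩)
      (by simp [Fin.le_def])
    simpa using this
  calc s.countP (fun a => decide (a < m))
      = (s.take k).countP (fun a => decide (a < m))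
        + (s.drop k).countP (fun a => decide (a < m)) := by
        rw [← List.countP_append, List.take_append_drop]
    _ ≤ k := by
        rw [hd, Nat.add_zero]
        exact List.countP_le_length.trans (by simp)

lemma le_getElem_of_countP {s : List ℝ} (hs : s.Pairwise (· ≤ ·)) {m : ℝ} {k : ℕ}
    (hk : k < s.length) (hc : s.countP (fun a => decide (a < m)) ≤ k) :
    m ≤ s[k] := by
  by_contra hlt
  push_neg at hlt
  have ht : (s.take (k+1)).countP (fun a => decide (a < m)) = (s.take (k+1)).length := by
    rw [List.countP_eq_length]
    intro a ha
    obtain ⟨j, hj, rfl⟩ := List.getElem_of_mem ha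
    have hj' : j ≤ k := by simp [List.length_take] at hj; omega
    simp only [decide_eq_true_eq, List.getElem_take]
    refine lt_of_le_of_lt ?_ hlt
    have := hs.rel_get_of_le (a := ⟨j, by omega⟩) (b := ⟨k, hk⟩) (by simp [Fin.le_def, hj'])
    simpa using this
  have : k + 1 ≤ s.countP (fun a => decide (a < m)) := by
    calc k + 1 = (s.take (k+1)).length := by simp; omega
      _ = (s.take (k+1)).countP (fun a => decide (a < m)) := ht.symm
      _ ≤ s.countP (fun a => decide (a < m)) := by
          conv_rhs => rw [← List.take_append_drop (k+1) s, List.countP_append]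
          omega
  omega

lemma countP_gt_le {s : List ℝ} (hs : s.Pairwise (· ≤ ·)) {m : ℝ} {k : ℕ}
    (hk : k < s.length) (h : s[k] ≤ m) :
    s.countP (fun a => decide (m < a)) ≤ s.length - (k + 1) := by
  have ht : (s.take (k+1)).countP (fun a => decide (m < a)) = 0 := by
    rw [List.countP_eq_zero]
    intro a ha
    obtain ⟨j, hj, rfl⟩ := List.getElem_of_mem ha
    have hj' : j ≤ k := by simp [List.length_take] at hj; omega
    simp only [decide_eq_true_eq, List.getElem_take, not_lt]
    refine le_trans ?_ h
    have := hs.rel_get_of_le (a := ⟨j, by omega⟩) (b := ⟨k, hk⟩) (by simp [Fin.le_def, hj'])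
    simpa using this
  calc s.countP (fun a => decide (m < a))
      = (s.take (k+1)).countP (fun a => decide (m < a))
        + (s.drop (k+1)).countP (fun a => decide (m < a)) := by
        rw [← List.countP_append, List.take_append_drop]
    _ ≤ s.length - (k+1) := by
        rw [ht, Nat.zero_add]
        exact List.countP_le_length.trans (by simp)

lemma getElem_le_of_countP {s : List ℝ} (hs : s.Pairwise (· ≤ ·)) {m : ℝ} {k : ℕ}
    (hk : k < s.length) (hc : s.countP (fun a => decide (m < a)) ≤ s.length - (k + 1)) :
    s[k] ≤ m := by
  by_contra hlt
  push_neg at hlt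
  have hd : (s.drop k).countP (fun a => decide (m < a)) = (s.drop k).length := by
    rw [List.countP_eq_length]
    intro a ha
    obtain ⟨j, hj, rfl⟩ := List.getElem_of_mem ha
    simp only [decide_eq_true_eq, List.getElem_drop]
    refine lt_of_lt_of_le hlt ?_
    have := hs.rel_get_of_le (a := ⟨k, hk⟩)
      (b := ⟨k + j, by have := hj; simp [List.length_drop] at this; omega⟩)
      (by simp [Fin.le_def])
    simpa using this
  have : s.length - k ≤ s.countP (fun a => decide (m < a)) := by
    calc s.length - k = (s.drop k).length := by simp
      _ = (s.drop k).countP (fun a => decide (m < a)) := hd.symm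
      _ ≤ s.countP (fun a => decide (m < a)) := by
          conv_rhs => rw [← List.take_append_drop k s, List.countP_append]
          omega
  omega
lemma length_insertionSort (l : List ℝ) : (l.insertionSort (· ≤ ·)).length = l.length :=
  (l.perm_insertionSort (· ≤ ·)).length_eq

lemma med_odd {l : List ℝ} {k : ℕ} (hn : l.length = 2*k+1) :
    med l = (l.insertionSort (· ≤ ·))[k]'(by rw [length_insertionSort]; omega) := by
  have h3 : k < (l.insertionSort (· ≤ ·)).length := by rw [length_insertionSort]; omega
  rw [med]
  have h2 : l.length / 2 = k := by omega
  rw [if_pos (by omega : l.length % 2 = 1), h2, List.getD_eq_getElem _ _ h3]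

lemma med_even {l : List ℝ} {k : ℕ} (hn : l.length = 2*k+2) :
    med l = ((l.insertionSort (· ≤ ·))[k]'(by rw [length_insertionSort]; omega)
      + (l.insertionSort (· ≤ ·))[k+1]'(by rw [length_insertionSort]; omega)) / 2 := by
  have h3 : k < (l.insertionSort (· ≤ ·)).length := by rw [length_insertionSort]; omega
  have h4 : k + 1 < (l.insertionSort (· ≤ ·)).length := by rw [length_insertionSort]; omega
  rw [med]
  have h2 : l.length / 2 = k + 1 := by omega
  rw [if_neg (by omega : ¬ l.length % 2 = 1), h2]
  simp only [Nat.add_sub_cancel]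
  rw [List.getD_eq_getElem _ _ h3, List.getD_eq_getElem _ _ h4]

lemma countP_concat_lt {l : List ℝ} {y m : ℝ} (hy : m ≤ y) :
    ((l ++ [y]).insertionSort (· ≤ ·)).countP (fun a => decide (a < m)) =
      (l.insertionSort (· ≤ ·)).countP (fun a => decide (a < m)) := by
  rw [((l ++ [y]).perm_insertionSort (· ≤ ·)).countP_eq,
    (l.perm_insertionSort (· ≤ ·)).countP_eq, List.countP_append]
  simp [List.countP_singleton, not_lt.2 hy]

lemma countP_concat_gt {l : List ℝ} {y m : ℝ} (hy : y ≤ m) :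
    ((l ++ [y]).insertionSort (· ≤ ·)).countP (fun a => decide (m < a)) =
      (l.insertionSort (· ≤ ·)).countP (fun a => decide (m < a)) := by
  rw [((l ++ [y]).perm_insertionSort (· ≤ ·)).countP_eq,
    (l.perm_insertionSort (· ≤ ·)).countP_eq, List.countP_append]
  simp [List.countP_singleton, not_lt.2 hy]

lemma sorted_getElem_mono {s : List ℝ} (hs : s.Pairwise (· ≤ ·)) {i j : ℕ} (hij : i ≤ j)
    (hj : j < s.length) : s[i]'(by omega) ≤ s[j] := by
  have := hs.rel_get_of_le (a := ⟨i, by omega⟩) (b := ⟨j, hj⟩) (Fin.mk_le_mk.mpr hij)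
  simpa using this

lemma med_le_med_concat {l : List ℝ} (hl : 2 ≤ l.length) {y : ℝ} (hy : med l ≤ y) :
    med l ≤ med (l ++ [y]) := by
  set s := l.insertionSort (· ≤ ·) with hs_def
  set s' := (l ++ [y]).insertionSort (· ≤ ·) with hs'_def
  have hs : s.Pairwise (· ≤ ·) := List.pairwise_insertionSort _ l
  have hs' : s'.Pairwise (· ≤ ·) := List.pairwise_insertionSort _ (l ++ [y])
  have hlen : s.length = l.length := length_insertionSort l
  have hlen' : s'.length = l.length + 1 := by
    rw [hs'_def, length_insertionSort, List.length_append]; simp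
  have hcc : s'.countP (fun a => decide (a < med l)) = s.countP (fun a => decide (a < med l)) :=
    countP_concat_lt hy
  rcases Nat.even_or_odd l.length with he | ⟨k, hk⟩
  · -- even
    obtain ⟨j, hj⟩ : ∃ j, l.length = 2*j+2 := by
      obtain ⟨k, hk⟩ := he; exact ⟨k - 1, by omega⟩
    have h1 : j + 1 < s.length := by omega
    have hm : med l = (s[j]'(by omega) + s[j+1]'h1) / 2 := med_even hj
    have hle : s[j]'(by omega) ≤ s[j+1]'h1 := sorted_getElem_mono hs (by omega) h1
    have hmle : med l ≤ s[j+1]'h1 := by rw [hm]; linarith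
    have hc : s.countP (fun a => decide (a < med l)) ≤ j + 1 := countP_lt_le hs h1 hmle
    have hc' : s'.countP (fun a => decide (a < med l)) ≤ j + 1 := by omega
    have hmed' : med (l ++ [y]) = s'[j+1]'(by omega) :=
      med_odd (by rw [List.length_append]; simp; omega)
    rw [hmed']
    exact le_getElem_of_countP hs' (by omega) hc'
  · -- odd
    have h1 : k < s.length := by omega
    have hmle : med l ≤ s[k]'h1 := le_of_eq (med_odd hk)
    have hc : s.countP (fun a => decide (a < med l)) ≤ k := countP_lt_le hs h1 hmle
    have hmed' : med (l ++ [y]) = (s'[k]'(by omega) + s'[k+1]'(by omega)) / 2 :=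
      med_even (by rw [List.length_append]; simp; omega)
    rw [hmed']
    have g1 : med l ≤ s'[k]'(by omega) := le_getElem_of_countP hs' (by omega) (by omega)
    have g2 : med l ≤ s'[k+1]'(by omega) := le_getElem_of_countP hs' (by omega) (by omega)
    linarith

lemma med_concat_le {l : List ℝ} (hl : 2 ≤ l.length) {y : ℝ} (hy : y ≤ med l) :
    med (l ++ [y]) ≤ med l := by
  set s := l.insertionSort (· ≤ ·) with hs_def
  set s' := (l ++ [y]).insertionSort (· ≤ ·) with hs'_def
  have hs : s.Pairwise (· ≤ ·) := List.pairwise_insertionSort _ l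
  have hs' : s'.Pairwise (· ≤ ·) := List.pairwise_insertionSort _ (l ++ [y])
  have hlen : s.length = l.length := length_insertionSort l
  have hlen' : s'.length = l.length + 1 := by
    rw [hs'_def, length_insertionSort, List.length_append]; simp
  have hcc : s'.countP (fun a => decide (med l < a)) = s.countP (fun a => decide (med l < a)) :=
    countP_concat_gt hy
  rcases Nat.even_or_odd l.length with he | ⟨k, hk⟩
  · -- even
    obtain ⟨j, hj⟩ : ∃ j, l.length = 2*j+2 := by
      obtain ⟨k, hk⟩ := he; exact ⟨k - 1, by omega⟩
    have h1 : j + 1 < s.length := by omega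
    have hm : med l = (s[j]'(by omega) + s[j+1]'h1) / 2 := med_even hj
    have hle : s[j]'(by omega) ≤ s[j+1]'h1 := sorted_getElem_mono hs (by omega) h1
    have hmge : s[j]'(by omega) ≤ med l := by rw [hm]; linarith
    have hc : s.countP (fun a => decide (med l < a)) ≤ s.length - (j + 1) :=
      countP_gt_le hs (by omega) hmge
    have hc' : s'.countP (fun a => decide (med l < a)) ≤ s'.length - (j + 1 + 1) := by omega
    have hmed' : med (l ++ [y]) = s'[j+1]'(by omega) :=
      med_odd (by rw [List.length_append]; simp; omega)
    rw [hmed']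
    exact getElem_le_of_countP hs' (by omega) hc'
  · -- odd
    have h1 : k < s.length := by omega
    have hmge : s[k]'h1 ≤ med l := le_of_eq (med_odd hk).symm
    have hc : s.countP (fun a => decide (med l < a)) ≤ s.length - (k + 1) :=
      countP_gt_le hs h1 hmge
    have hmed' : med (l ++ [y]) = (s'[k]'(by omega) + s'[k+1]'(by omega)) / 2 :=
      med_even (by rw [List.length_append]; simp; omega)
    rw [hmed']
    have g1 : s'[k]'(by omega) ≤ med l :=
      getElem_le_of_countP hs' (by omega) (by omega)
    have g2 : s'[k+1]'(by omega) ≤ med l :=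
      getElem_le_of_countP hs' (by omega) (by omega)
    linarith

lemma firstTerms_succ (X : ℕ → ℝ) (n : ℕ) :
    firstTerms X (n + 1) = firstTerms X n ++ [X (n + 1)] := by
  unfold firstTerms
  rw [List.range'_1_concat, List.map_append]
  simp [Nat.add_comm]

lemma length_firstTerms (X : ℕ → ℝ) (n : ℕ) : (firstTerms X n).length = n := by
  simp [firstTerms]

lemma medn_step (X : ℕ → ℝ) (n : ℕ) (hn : 2 ≤ n) :
    (medn X n ≤ X (n + 1) → medn X n ≤ medn X (n + 1)) ∧
    (X (n + 1) ≤ medn X n → medn X (n + 1) ≤ medn X n) := by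
  have hlen : 2 ≤ (firstTerms X n).length := by rw [length_firstTerms]; exact hn
  constructor
  · intro hle
    have := med_le_med_concat hlen hle
    rwa [medn, medn, firstTerms_succ]
  · intro hle
    have := med_concat_le hlen hle
    rwa [medn, medn, firstTerms_succ]

theorem medians_monotone (x : ℝ) (hx0 : 0 < x) (hx1 : x < 1) (X : ℕ → ℝ)
    (h : IsMnM 0 x 1 X) :
    ((∀ n, 4 ≤ n → medn X n ≤ medn X (n + 1)) ∨
      (∀ n, 4 ≤ n → medn X (n + 1) ≤ medn X n)) ∧
    (∀ n, 4 ≤ n →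
      (medn X n ≤ X (n + 1) → medn X n ≤ medn X (n + 1)) ∧
      (X (n + 1) ≤ medn X n → medn X (n + 1) ≤ medn X n)) := by
  obtain ⟨h1, h2, h3, hrec⟩ := h
  set S : ℕ → ℝ := fun n => ∑ j ∈ Finset.Icc 1 n, X j with hS_def
  have hrec' : ∀ n, 3 ≤ n → X (n + 1) = (n + 1) * medn X n - S n := by
    intro n hn
    have := hrec (n + 1) (by omega)
    simpa using this
  have hSsucc : ∀ n, 1 ≤ n → S (n + 1) = S n + X (n + 1) := by
    intro n hn
    simp only [hS_def]
    rw [Finset.sum_Icc_succ_top (by omega)]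
  -- part 2
  have part2 : ∀ n, 4 ≤ n →
      (medn X n ≤ X (n + 1) → medn X n ≤ medn X (n + 1)) ∧
      (X (n + 1) ≤ medn X n → medn X (n + 1) ≤ medn X n) := by
    intro n hn
    exact medn_step X n (by omega)
  refine ⟨?_, part2⟩
  -- the persistence step
  have step_up : ∀ n, 4 ≤ n → S n ≤ n * medn X n →
      S (n + 1) ≤ (n + 1) * medn X (n + 1) ∧ medn X n ≤ medn X (n + 1) := by
    intro n hn hSn
    have hx : medn X n ≤ X (n + 1) := by
      rw [hrec' n (by omega)]
      have : (0:ℝ) ≤ n * medn X n - S n := by linarith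
      linarith
    have hmed : medn X n ≤ medn X (n + 1) := (part2 n hn).1 hx
    have hSeq : S (n + 1) = (n + 1) * medn X n := by
      rw [hSsucc n (by omega), hrec' n (by omega)]; ring
    refine ⟨?_, hmed⟩
    rw [hSeq]
    have hpos : (0:ℝ) ≤ (n:ℝ) + 1 := by positivity
    push_cast
    nlinarith
  have step_dn : ∀ n : ℕ, 4 ≤ n → (n : ℝ) * medn X n ≤ S n →
      ((n : ℝ) + 1) * medn X (n + 1) ≤ S (n + 1) ∧ medn X (n + 1) ≤ medn X n := by
    intro n hn hSn
    have hx : X (n + 1) ≤ medn X n := by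
      rw [hrec' n (by omega)]
      linarith
    have hmed : medn X (n + 1) ≤ medn X n := (part2 n hn).2 hx
    have hSeq : S (n + 1) = (n + 1) * medn X n := by
      rw [hSsucc n (by omega), hrec' n (by omega)]; ring
    refine ⟨?_, hmed⟩
    rw [hSeq]
    have hpos : (0:ℝ) ≤ (n:ℝ) + 1 := by positivity
    nlinarith
  rcases le_total (S 4) (4 * medn X 4) with h4 | h4
  · left
    have key : ∀ n, 4 ≤ n → S n ≤ n * medn X n ∧ medn X n ≤ medn X (n + 1) := by
      intro n hn
      induction n, hn using Nat.le_induction with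
      | base => exact ⟨by exact_mod_cast h4, (step_up 4 (by norm_num) (by exact_mod_cast h4)).2⟩
      | succ n hn ih =>
        have hs := (step_up n hn ih.1).1
        have hs' : S (n+1) ≤ ((n:ℝ)+1) * medn X (n+1) := by push_cast at hs ⊢; linarith
        exact ⟨by push_cast; linarith, (step_up (n+1) (by omega) (by push_cast; linarith)).2⟩
    exact fun n hn => (key n hn).2
  · right
    have key : ∀ n : ℕ, 4 ≤ n → (n : ℝ) * medn X n ≤ S n ∧ medn X (n + 1) ≤ medn X n := by
      intro n hn
      induction n, hn using Nat.le_induction with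
      | base => exact ⟨by exact_mod_cast h4, (step_dn 4 (by norm_num) (by exact_mod_cast h4)).2⟩
      | succ n hn ih =>
        have hs := (step_dn n hn ih.1).1
        exact ⟨by push_cast; push_cast at hs; linarith,
          (step_dn (n+1) (by omega) (by push_cast; push_cast at hs; linarith)).2⟩
    exact fun n hn => (key n hn).2
end

section
/- The M&m construction is affinely equivariant: if φ(t) = αt + β with α ≠ 0 and (x_n) is the M&m sequence generated from (a, b, c), then the M&m sequence generated from (φ(a), φ(b), φ(c)) is (φ(x_n)). Consequently the study of M&m sequences for arbitrary a < b < c reduces to starting triples (0, x, 1) with 0 < x < 1. -/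
open Finset Filter

lemma getD_reverse (l : List ℝ) (i : ℕ) (h : i < l.length) :
    l.reverse.getD i 0 = l.getD (l.length - 1 - i) 0 := by
  rw [List.getD_eq_getElem _ _ (by simpa using h), List.getD_eq_getElem _ _ (by omega),
    List.getElem_reverse]

lemma getD_map (φ : ℝ → ℝ) (l : List ℝ) (i : ℕ) (h : i < l.length) :
    (l.map φ).getD i 0 = φ (l.getD i 0) := by
  rw [List.getD_eq_getElem _ _ (by simpa using h), List.getD_eq_getElem _ _ h,
    List.getElem_map]

lemma med_map (α β : ℝ) (hα : α ≠ 0) (l : List ℝ) (hl : l ≠ []) :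
    med (l.map (fun t => α * t + β)) = α * med l + β := by
  set φ : ℝ → ℝ := fun t => α * t + β with hφ
  have hperm : (l.insertionSort (· ≤ ·)).Perm l := l.perm_insertionSort (· ≤ ·)
  have hsorted : (l.insertionSort (· ≤ ·)).Pairwise (· ≤ ·) := l.pairwise_insertionSort (· ≤ ·)
  set s := l.insertionSort (· ≤ ·) with hs
  clear_value s
  
  have hlen : s.length = l.length := hperm.length_eq
  have hslen : (s.map φ).length = l.length := by simp [hlen]
  have hlpos : 0 < l.length := List.length_pos_iff.2 hl
  rcases lt_or_gt_of_ne hα with hneg | hpos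
  · -- α < 0
    have key : (l.map φ).insertionSort (· ≤ ·) = (s.map φ).reverse := by
      apply List.Perm.eq_of_pairwise' (hl := ((l.map φ).perm_insertionSort (· ≤ ·)).trans
          ((hperm.map φ).symm.trans ((s.map φ).reverse_perm.symm)))
        ((l.map φ).pairwise_insertionSort (· ≤ ·))
      · rw [List.pairwise_reverse, List.pairwise_map]
        exact hsorted.imp fun {a b} hab => by
          simp only [hφ]
          nlinarith
    simp only [med, List.length_map, key, ← hs]
    rcases Nat.even_or_odd l.length with he | ho
    · have hmod : l.length % 2 ≠ 1 := by rcases he with ⟨k, hk⟩; omega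
      have h2 : 2 ≤ l.length := by rcases he with ⟨k, hk⟩; omega
      rw [if_neg hmod, if_neg hmod,
        getD_reverse _ _ (by omega), getD_reverse _ _ (by omega), hslen]
      have e1 : l.length - 1 - (l.length / 2 - 1) = l.length / 2 := by omega
      have e2 : l.length - 1 - (l.length / 2) = l.length / 2 - 1 := by omega
      rw [e1, e2, getD_map _ _ _ (by omega), getD_map _ _ _ (by omega)]
      simp only [hφ]; ring
    · have hmod : l.length % 2 = 1 := Nat.odd_iff.1 ho
      rw [if_pos hmod, if_pos hmod, getD_reverse _ _ (by omega), hslen]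
      have e2 : l.length - 1 - (l.length / 2) = l.length / 2 := by omega
      rw [e2, getD_map _ _ _ (by omega)]
  · -- α > 0
    have key : (l.map φ).insertionSort (· ≤ ·) = s.map φ := by
      apply List.Perm.eq_of_pairwise' (hl := ((l.map φ).perm_insertionSort (· ≤ ·)).trans (hperm.map φ).symm)
        ((l.map φ).pairwise_insertionSort (· ≤ ·))
      · rw [List.pairwise_map]
        exact hsorted.imp fun {a b} hab => by
          simp only [hφ]
          nlinarith
    simp only [med, List.length_map, key, ← hs]
    rcases Nat.even_or_odd l.length with he | ho
    · have hmod : l.length % 2 ≠ 1 := by rcases he with ⟨k, hk⟩; omega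
      have h2 : 2 ≤ l.length := by rcases he with ⟨k, hk⟩; omega
      rw [if_neg hmod, if_neg hmod, getD_map _ _ _ (by omega), getD_map _ _ _ (by omega)]
      simp only [hφ]; ring
    · have hmod : l.length % 2 = 1 := Nat.odd_iff.1 ho
      rw [if_pos hmod, if_pos hmod, getD_map _ _ _ (by omega)]

lemma medn_map (α β : ℝ) (hα : α ≠ 0) (X : ℕ → ℝ) (n : ℕ) (hn : 1 ≤ n) :
    medn (fun k => α * X k + β) n = α * medn X n + β := by
  have h1 : firstTerms (fun k => α * X k + β) n
      = (firstTerms X n).map (fun t => α * t + β) := by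
    simp [firstTerms, List.map_map, Function.comp]
  have h2 : firstTerms X n ≠ [] := by
    simp only [firstTerms, ne_eq, List.map_eq_nil_iff]
    intro h
    have := congrArg List.length h
    simp at this
    omega
  rw [medn, medn, h1, med_map α β hα _ h2]

theorem mnm_affine_equivariant :
    (∀ (α β a b c : ℝ), α ≠ 0 → ∀ X : ℕ → ℝ, IsMnM a b c X →
      IsMnM (α * a + β) (α * b + β) (α * c + β) (fun n => α * X n + β)) ∧
    (∀ a b c : ℝ, a < b → b < c → ∃ α β x : ℝ, α ≠ 0 ∧ 0 < x ∧ x < 1 ∧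
      α * 0 + β = a ∧ α * x + β = b ∧ α * 1 + β = c) := by
  constructor
  · rintro α β a b c hα X ⟨h1, h2, h3, h4⟩
    refine ⟨by simp only []; rw [h1], by simp only []; rw [h2], by simp only []; rw [h3], ?_⟩
    intro n hn
    have hm := medn_map α β hα X (n - 1) (by omega)
    simp only
    rw [hm, h4 n hn, Finset.sum_add_distrib, ← Finset.mul_sum, Finset.sum_const,
      Nat.card_Icc]
    rw [nsmul_eq_mul]
    have : ((n - 1 + 1 - 1 : ℕ) : ℝ) = (n : ℝ) - 1 := by
      have : n - 1 + 1 - 1 = n - 1 := by omega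
      rw [this, Nat.cast_sub (by omega)]
      norm_num
    rw [this]
    ring
  · intro a b c hab hbc
    refine ⟨c - a, a, (b - a) / (c - a), by linarith [sub_ne_zero.2 (by linarith : c ≠ a)],
      div_pos (by linarith) (by linarith),
      (div_lt_one (by linarith)).2 (by linarith), by ring, ?_, by ring⟩
    have hca : c - a ≠ 0 := sub_ne_zero.2 (ne_of_gt (by linarith))
    field_simp
    ring
end

section
/- Conversely, if the median sequence of an M&m sequence started from (0, x, 1) becomes constant, say m_n = M for all n ≥ k, then the sequence itself becomes constant: x_n = M for all n ≥ k + 2. -/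
open Finset Filter

lemma sum_eq_aux (X : ℕ → ℝ)
    (hrec : ∀ n, 4 ≤ n → X n = n * medn X (n - 1) - ∑ j ∈ Finset.Icc 1 (n - 1), X j) :
    ∀ n, 4 ≤ n → ∑ j ∈ Finset.Icc 1 n, X j = n * medn X (n - 1) := by
  intro n hn
  obtain ⟨m, rfl⟩ : ∃ m, n = m + 1 := ⟨n - 1, by omega⟩
  rw [Finset.sum_Icc_succ_top (by omega), hrec (m + 1) hn]
  simp

theorem stable_of_median_const (x : ℝ) (hx0 : 0 < x) (hx1 : x < 1) (X : ℕ → ℝ)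
    (h : IsMnM 0 x 1 X) (k : ℕ) (M : ℝ)
    (hmed : ∀ n, k ≤ n → medn X n = M) :
    ∀ n, k + 2 ≤ n → X n = M := by
  obtain ⟨h1, h2, h3, hrec⟩ := h
  rcases le_or_gt k 2 with hk | hk
  · exfalso
    have e2 : medn X 2 = x / 2 := by
      simp [medn, firstTerms, med, List.range', List.insertionSort, List.orderedInsert, h1, h2,
        hx0.le]
    have e3 : medn X 3 = x := by
      simp [medn, firstTerms, med, List.range', List.insertionSort, List.orderedInsert, h1, h2,
        h3, hx0.le, hx1.le, (hx0.trans hx1).le]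
    have := hmed 2 (by omega)
    have := hmed 3 (by omega)
    rw [e2] at *; rw [e3] at *
    linarith
  · intro n hn
    have h5 : 5 ≤ n := by omega
    have hsum : ∑ j ∈ Finset.Icc 1 (n - 1), X j = (n - 1 : ℕ) * medn X (n - 2) := by
      have := sum_eq_aux X hrec (n - 1) (by omega)
      rwa [show n - 1 - 1 = n - 2 from by omega] at this
    rw [hrec n (by omega), hsum, hmed (n - 1) (by omega), hmed (n - 2) (by omega)]
    have : ((n : ℝ) - 1) = ((n - 1 : ℕ) : ℝ) := by
      rw [Nat.cast_sub (by omega)]; simp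
    rw [← this]
    ring
end

section
/- For every x with 1/2 < x ≤ 1897/3762, the first three generated terms of the M&m sequence started from (0, x, 1) are x₄ = 3x − 1, x₅ = 6x − 5/2, x₆ = 8x − 7/2, and they satisfy the ordering 0 < x < 3x − 1 < 6x − 5/2 < 8x − 7/2 < 1. -/
open Finset Filter

theorem mnm_first_terms_near_half (x : ℝ) (hx : 1/2 < x) (hx' : x ≤ 1897/3762)
    (X : ℕ → ℝ) (h : IsMnM 0 x 1 X) :
    X 4 = 3 * x - 1 ∧ X 5 = 6 * x - 5/2 ∧ X 6 = 8 * x - 7/2 ∧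
    0 < x ∧ x < 3 * x - 1 ∧ 3 * x - 1 < 6 * x - 5/2 ∧
    6 * x - 5/2 < 8 * x - 7/2 ∧ 8 * x - 7/2 < 1 := by
  obtain ⟨h1, h2, h3, hrec⟩ := h
  have ha : (0:ℝ) ≤ x := by linarith
  have hb : x ≤ (1:ℝ) := by linarith
  have hc : x ≤ 3*x - 1 := by linarith
  have hd : ¬ ((1:ℝ) ≤ 3*x - 1) := by intro hh; linarith
  have he : 3*x - 1 ≤ 6*x - 5/2 := by linarith
  have hf : ¬ ((1:ℝ) ≤ 6*x - 5/2) := by intro hh; linarith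
  have hg : (0:ℝ) ≤ 3*x - 1 := by linarith
  have m3 : medn X 3 = x := by
    simp [medn, firstTerms, med, List.range', h1, h2, h3,
      List.insertionSort, List.orderedInsert, ha, hb]
  have s3 : ∑ j ∈ Finset.Icc 1 3, X j = x + 1 := by
    rw [show Finset.Icc 1 3 = ({1,2,3} : Finset ℕ) by decide]
    simp [h1, h2, h3]; try ring
  have e4 : X 4 = 3 * x - 1 := by
    rw [hrec 4 (by norm_num)]
    norm_num [m3, s3]
    try ring
  have m4 : medn X 4 = 2*x - 1/2 := by
    simp [medn, firstTerms, med, List.range', h1, h2, h3, e4,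
      List.insertionSort, List.orderedInsert, ha, hb, hc, hd]
    ring
  have s4 : ∑ j ∈ Finset.Icc 1 4, X j = 4*x := by
    rw [show Finset.Icc 1 4 = ({1,2,3,4} : Finset ℕ) by decide]
    simp [h1, h2, h3, e4]; try ring
  have e5 : X 5 = 6 * x - 5/2 := by
    rw [hrec 5 (by norm_num)]
    norm_num [m4, s4]
    try ring
  have m5 : medn X 5 = 3*x - 1 := by
    simp [medn, firstTerms, med, List.range', h1, h2, h3, e4, e5,
      List.insertionSort, List.orderedInsert, ha, hb, hc, hd, he, hf]
  have s5 : ∑ j ∈ Finset.Icc 1 5, X j = 10*x - 5/2 := by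
    rw [show Finset.Icc 1 5 = ({1,2,3,4,5} : Finset ℕ) by decide]
    simp [h1, h2, h3, e4, e5]; try ring
  have e6 : X 6 = 8 * x - 7/2 := by
    rw [hrec 6 (by norm_num)]
    norm_num [m5, s5]
    try ring
  refine ⟨e4, e5, e6, by linarith, by linarith, by linarith, by linarith, by linarith⟩
end

section
/- If for some x the limit m(x) of the median sequence of the M&m sequence started from (0,x,1) exists and the sequence stabilizes at value m(x), then there is an index 4 ≤ l < L(x) with x_l = m(x); that is, the eventual constant value of an M&m sequence must already appear earlier in the sequence. -/
open Finset Filter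

lemma med_eq_avg (l : List ℝ) (hl : l ≠ []) :
    ∃ a ∈ l, ∃ b ∈ l, med l = (a + b) / 2 := by
  set s := l.insertionSort (· ≤ ·) with hs
  have hperm : s.Perm l := List.perm_insertionSort _ _
  have hlen : s.length = l.length := hperm.length_eq
  have hpos : 0 < l.length := List.length_pos_iff.2 hl
  have h2 : l.length / 2 < s.length := by omega
  by_cases hpar : l.length % 2 = 1
  · refine ⟨s[l.length / 2], hperm.subset (s.getElem_mem h2),
      s[l.length / 2], hperm.subset (s.getElem_mem h2), ?_⟩
    rw [med, if_pos hpar, List.getD_eq_getElem _ _ h2]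
    ring
  · have h1 : l.length / 2 - 1 < s.length := by omega
    refine ⟨s[l.length / 2 - 1], hperm.subset (s.getElem_mem h1),
      s[l.length / 2], hperm.subset (s.getElem_mem h2), ?_⟩
    rw [med, if_neg hpar, List.getD_eq_getElem _ _ h1, List.getD_eq_getElem _ _ h2]

lemma two_copies (A : List ℝ) (y M : ℝ) (hn : 2 ≤ A.length)
    (h1 : med A = M) (h2 : med (A ++ [y]) = M) (hy : y ≠ M) :
    2 ≤ A.countP (fun z => decide (z = M)) := by
  classical
  set n := A.length with hnA
  set s := A.insertionSort (· ≤ ·) with hsdef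
  have hs_sorted : s.Pairwise (· ≤ ·) := List.pairwise_insertionSort _ _
  have hs_perm : s.Perm A := List.perm_insertionSort _ _
  have hs_len : s.length = n := hs_perm.length_eq
  set t := s.orderedInsert (· ≤ ·) y with htdef
  have ht_sorted : t.Pairwise (· ≤ ·) := hs_sorted.orderedInsert y s
  have ht_perm : t.Perm (A ++ [y]) :=
    (List.perm_orderedInsert _ y s).trans
      ((hs_perm.cons y).trans (List.perm_append_singleton y A).symm)
  have ht_len : t.length = n + 1 := by
    rw [htdef, List.orderedInsert_length, hs_len]
  have key : (A ++ [y]).insertionSort (· ≤ ·) = t :=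
    List.Perm.eq_of_pairwise' (List.pairwise_insertionSort _ _) ht_sorted
      ((List.perm_insertionSort _ _).trans ht_perm.symm)
  obtain ⟨P, D, htPD, hsPD⟩ : ∃ P D, t = P ++ y :: D ∧ P ++ D = s :=
    ⟨_, _, List.orderedInsert_eq_take_drop _ y s, List.takeWhile_append_dropWhile⟩
  set k := P.length with hkdef
  have hk : k ≤ n := by
    have := congrArg List.length hsPD
    simp at this; omega
  have lt1 : ∀ i, i < k → t.getD i 0 = s.getD i 0 := by
    intro i hi
    rw [htPD, ← hsPD, List.getD_append _ _ _ _ (by omega), List.getD_append _ _ _ _ (by omega)]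
  have lt2 : t.getD k 0 = y := by
    rw [htPD, List.getD_append_right _ _ _ _ (le_refl k)]
    simp [hkdef]
  have lt3 : ∀ i, k < i → i ≤ n → t.getD i 0 = s.getD (i - 1) 0 := by
    intro i hi hin
    rw [htPD, ← hsPD, List.getD_append_right _ _ _ _ (by omega),
      List.getD_append_right _ _ _ _ (by omega)]
    have : i - k = (i - 1 - k) + 1 := by omega
    rw [this]
    simp [hkdef]
  -- the two median equations
  have e2' : med (A ++ [y]) =
      if (n + 1) % 2 = 1 then t.getD ((n + 1) / 2) 0
      else (t.getD ((n + 1) / 2 - 1) 0 + t.getD ((n + 1) / 2) 0) / 2 := by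
    rw [med, key, List.length_append]
    simp [hnA]
  rw [h2] at e2'
  have e1' : med A =
      if n % 2 = 1 then s.getD (n / 2) 0
      else (s.getD (n / 2 - 1) 0 + s.getD (n / 2) 0) / 2 := by
    rw [med]
  rw [h1] at e1'
  -- final step helper
  have final : ∀ p, p + 1 < n → s.getD p 0 = M → s.getD (p + 1) 0 = M →
      2 ≤ A.countP (fun z => decide (z = M)) := by
    intro p hp hsp hsp1
    have h1p : p < s.length := by omega
    have h2p : p + 1 < s.length := by omega
    have hdrop : s.drop p = M :: M :: s.drop (p + 2) := by
      rw [List.drop_eq_getElem_cons h1p, List.drop_eq_getElem_cons h2p]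
      rw [List.getD_eq_getElem _ _ h1p] at hsp
      rw [List.getD_eq_getElem _ _ h2p] at hsp1
      rw [hsp, hsp1]
    have hle : (s.drop p).countP (fun z => decide (z = M)) ≤
        s.countP (fun z => decide (z = M)) :=
      (List.drop_sublist p s).countP_le
    rw [hdrop] at hle
    simp [List.countP_cons] at hle
    rw [← hs_perm.countP_eq]
    omega
  set m := n / 2 with hm
  by_cases hpar : n % 2 = 1
  -- n odd, n = 2m+1
  · have hn3 : n = 2 * m + 1 := by omega
    have hm1 : 1 ≤ m := by omega
    rw [if_pos hpar] at e1'
    rw [if_neg (by omega)] at e2'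
    have hidx : (n + 1) / 2 = m + 1 := by omega
    rw [hidx] at e2'
    simp only [Nat.add_sub_cancel] at e2'
    rcases lt_trichotomy k (m + 1) with hk' | hk' | hk'
    · have hT : t.getD (m + 1) 0 = M := by
        rw [lt3 (m + 1) (by omega) (by omega), Nat.add_sub_cancel]
        exact e1'.symm
      rcases eq_or_lt_of_le (show k ≤ m by omega) with hk2 | hk2
      · exfalso; apply hy
        have hty : t.getD m 0 = y := by rw [← hk2]; exact lt2
        rw [hty, hT] at e2'
        linarith
      · have hT2 : t.getD m 0 = s.getD (m - 1) 0 := lt3 m (by omega) (by omega)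
        have hsm1 : s.getD (m - 1) 0 = M := by
          rw [hT2, hT] at e2'; linarith
        refine final (m - 1) (by omega) hsm1 ?_
        rw [show m - 1 + 1 = m by omega]
        exact e1'.symm
    · exfalso; apply hy
      have hty : t.getD (m + 1) 0 = y := by rw [← hk']; exact lt2
      rw [hty, lt1 m (by omega), ← e1'] at e2'
      linarith
    · have hT : t.getD m 0 = s.getD m 0 := lt1 m (by omega)
      have hT2 : t.getD (m + 1) 0 = s.getD (m + 1) 0 := lt1 (m + 1) (by omega)
      have hsm1 : s.getD (m + 1) 0 = M := by
        rw [hT, hT2, ← e1'] at e2'; linarith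
      exact final m (by omega) e1'.symm hsm1
  -- n even, n = 2m
  · have hn3 : n = 2 * m := by omega
    have hm1 : 1 ≤ m := by omega
    rw [if_neg hpar] at e1'
    rw [if_pos (by omega)] at e2'
    have hidx : (n + 1) / 2 = m := by omega
    rw [hidx] at e2'
    rcases lt_trichotomy k m with hk' | hk' | hk'
    · have hT : t.getD m 0 = s.getD (m - 1) 0 := lt3 m (by omega) (by omega)
      have hsm1 : s.getD (m - 1) 0 = M := by rw [hT] at e2'; exact e2'.symm
      have hsm : s.getD m 0 = M := by rw [hsm1] at e1'; linarith
      refine final (m - 1) (by omega) hsm1 ?_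
      rw [show m - 1 + 1 = m by omega]
      exact hsm
    · exfalso; apply hy
      have hty : t.getD m 0 = y := by rw [← hk']; exact lt2
      rw [hty] at e2'
      exact e2'.symm
    · have hT : t.getD m 0 = s.getD m 0 := lt1 m (by omega)
      have hsm : s.getD m 0 = M := by rw [hT] at e2'; exact e2'.symm
      have hsm1 : s.getD (m - 1) 0 = M := by rw [hsm] at e1'; linarith
      refine final (m - 1) (by omega) hsm1 ?_
      rw [show m - 1 + 1 = m by omega]
      exact hsm

theorem eventual_value_appears_earlier (x : ℝ) (hx0 : 0 < x) (hx1 : x < 1)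
    (X : ℕ → ℝ) (h : IsMnM 0 x 1 X) (L : ℕ) (hL : 4 < L)
    (hLeast : IsLeast {k | ∀ n, k < n → X n = X k} L)
    (M : ℝ) (hM : Filter.Tendsto (medn X) Filter.atTop (nhds M))
    (hval : X L = M) :
    ∃ l, 4 ≤ l ∧ l < L ∧ X l = M := by
  classical
  obtain ⟨hX1, hX2, hX3, hrec⟩ := h
  have hconst : ∀ n, L ≤ n → X n = M := by
    intro n hn
    rcases eq_or_lt_of_le hn with rfl | hn'
    · exact hval
    · rw [hLeast.1 n hn', hval]
  have hXLm1 : X (L - 1) ≠ M := by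
    have hnot : (L - 1) ∉ {k | ∀ n, k < n → X n = X k} := by
      intro hmem
      have := hLeast.2 hmem
      omega
    simp only [Set.mem_setOf_eq, not_forall] at hnot
    obtain ⟨n, hn1, hn2⟩ := hnot
    intro hXM
    exact hn2 (by rw [hconst n (by omega), hXM])
  have hSsum : ∀ n : ℕ, (∑ j ∈ Finset.Icc 1 (n + 1), X j) = (∑ j ∈ Finset.Icc 1 n, X j) + X (n + 1) :=
    fun n => Finset.sum_Icc_succ_top (by omega) X
  have hSLd : ∀ d : ℕ, (∑ j ∈ Finset.Icc 1 (L + d), X j) = (∑ j ∈ Finset.Icc 1 L, X j) + d * M := by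
    intro d
    induction d with
    | zero => simp
    | succ d ih =>
      rw [show L + (d + 1) = (L + d) + 1 by omega, hSsum, ih, hconst (L + d + 1) (by omega)]
      push_cast; ring
  have hmedd : ∀ d : ℕ, medn X (L + d) =
      M + ((∑ j ∈ Finset.Icc 1 L, X j) - L * M) / (L + d + 1) := by
    intro d
    have hr := hrec (L + d + 1) (by omega)
    rw [show L + d + 1 - 1 = L + d by omega, hconst (L + d + 1) (by omega), hSLd d] at hr
    have hden : ((L : ℝ) + d + 1) ≠ 0 := by positivity
    have hcast : ((L + d + 1 : ℕ) : ℝ) = (L : ℝ) + d + 1 := by push_cast; ring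
    rw [hcast] at hr
    field_simp
    linarith
  have hc : (∑ j ∈ Finset.Icc 1 L, X j) = L * M := by
    by_contra hc0
    have hcne : (∑ j ∈ Finset.Icc 1 L, X j) - L * M ≠ 0 := sub_ne_zero_of_ne hc0
    have hinj : Function.Injective (fun d : ℕ => medn X (L + d)) := by
      intro d1 d2 hd
      simp only [hmedd] at hd
      have h1 : ((L : ℝ) + d1 + 1) ≠ 0 := by positivity
      have h2 : ((L : ℝ) + d2 + 1) ≠ 0 := by positivity
      have heq : ((∑ j ∈ Finset.Icc 1 L, X j) - L * M) / ((L : ℝ) + d1 + 1) =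
          ((∑ j ∈ Finset.Icc 1 L, X j) - L * M) / ((L : ℝ) + d2 + 1) := by linarith
      rw [div_eq_div_iff h1 h2] at heq
      have heq2 := mul_left_cancel₀ hcne heq
      have : (d1 : ℝ) = d2 := by linarith
      exact_mod_cast this
    have hEfin : (X '' (Set.Icc 1 L)).Finite := (Set.finite_Icc 1 L).image X
    have hGfin : (Set.image2 (fun a b => (a + b) / 2) (X '' (Set.Icc 1 L)) (X '' (Set.Icc 1 L))).Finite :=
      hEfin.image2 _ hEfin
    have hmaps : ∀ d : ℕ, medn X (L + d) ∈
        Set.image2 (fun a b => (a + b) / 2) (X '' (Set.Icc 1 L)) (X '' (Set.Icc 1 L)) := by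
      intro d
      have hlen : (firstTerms X (L + d)).length = L + d := by simp [firstTerms]
      have hne : firstTerms X (L + d) ≠ [] := by
        apply List.ne_nil_of_length_pos
        omega
      obtain ⟨a, ha, b, hb, hab⟩ := med_eq_avg _ hne
      have hmem : ∀ z ∈ firstTerms X (L + d), z ∈ X '' (Set.Icc 1 L) := by
        intro z hz
        simp only [firstTerms, List.mem_map] at hz
        obtain ⟨j, hj, rfl⟩ := hz
        rw [List.mem_range'_1] at hj
        by_cases hjL : j ≤ L
        · exact ⟨j, ⟨hj.1, hjL⟩, rfl⟩
        · have hXj : X j = X L := by rw [hconst j (by omega), hval]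
          rw [hXj]
          exact ⟨L, ⟨by omega, le_refl L⟩, rfl⟩
      have hm : medn X (L + d) = (a + b) / 2 := hab
      rw [hm]
      exact Set.mem_image2_of_mem (hmem a ha) (hmem b hb)
    have hinf : (Set.range fun d : ℕ => medn X (L + d)).Infinite :=
      Set.infinite_range_of_injective hinj
    have hsub : (Set.range fun d : ℕ => medn X (L + d)) ⊆
        Set.image2 (fun a b => (a + b) / 2) (X '' (Set.Icc 1 L)) (X '' (Set.Icc 1 L)) := by
      rintro z ⟨d, rfl⟩; exact hmaps d
    exact hinf (hGfin.subset hsub)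
  obtain ⟨Lq, rfl⟩ : ∃ Lq, L = Lq + 2 := ⟨L - 2, by omega⟩
  have hLq : 3 ≤ Lq := by omega
  have hrecL := hrec (Lq + 2) (by omega)
  rw [show Lq + 2 - 1 = Lq + 1 by omega] at hrecL
  have hrecLp := hrec (Lq + 1) (by omega)
  rw [show Lq + 1 - 1 = Lq by omega] at hrecLp
  have hs1 := hSsum (Lq + 1)
  rw [show Lq + 1 + 1 = Lq + 2 by omega] at hs1
  have hs2 := hSsum Lq
  have hXL : X (Lq + 2) = M := hval
  have hSL1 : (∑ j ∈ Finset.Icc 1 (Lq + 1), X j) = ((Lq : ℝ) + 1) * M := by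
    rw [hXL] at hs1
    rw [hs1] at hc
    push_cast at hc ⊢
    linarith
  have hm1 : medn X (Lq + 1) = M := by
    have hden : ((Lq : ℝ) + 2) ≠ 0 := by positivity
    rw [hXL, hSL1] at hrecL
    have hcast : ((Lq + 2 : ℕ) : ℝ) = (Lq : ℝ) + 2 := by push_cast; ring
    rw [hcast] at hrecL
    have : ((Lq : ℝ) + 2) * medn X (Lq + 1) = ((Lq : ℝ) + 2) * M := by linarith
    exact mul_left_cancel₀ hden this
  have hm2 : medn X Lq = M := by
    have hden : ((Lq : ℝ) + 1) ≠ 0 := by positivity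
    rw [hs2] at hSL1
    have hcast : ((Lq + 1 : ℕ) : ℝ) = (Lq : ℝ) + 1 := by push_cast; ring
    rw [hcast] at hrecLp
    have : ((Lq : ℝ) + 1) * medn X Lq = ((Lq : ℝ) + 1) * M := by linarith
    exact mul_left_cancel₀ hden this
  have hXLp : X (Lq + 1) ≠ M := by
    rw [show Lq + 2 - 1 = Lq + 1 by omega] at hXLm1
    exact hXLm1
  have hsplit : firstTerms X (Lq + 1) = firstTerms X Lq ++ [X (Lq + 1)] := by
    have h11 : 1 + 1 * Lq = Lq + 1 := by omega
    simp only [firstTerms, List.range'_concat, h11, List.map_append, List.map_cons, List.map_nil]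
  have hcount : 2 ≤ (firstTerms X Lq).countP (fun z => decide (z = M)) := by
    refine two_copies (firstTerms X Lq) (X (Lq + 1)) M ?_ hm2 ?_ hXLp
    · have : (firstTerms X Lq).length = Lq := by simp [firstTerms]
      omega
    · rw [← hsplit]; exact hm1
  by_contra hcon
  push_neg at hcon
  have hsplit2 : List.range' 1 Lq = List.range' 1 3 ++ List.range' 4 (Lq - 3) := by
    have h3 := List.range'_append (s := 1) (m := 3) (n := Lq - 3) (step := 1)
    rw [show 3 + (Lq - 3) = Lq by omega] at h3
    simpa using h3.symm
  have hle1 : (firstTerms X Lq).countP (fun z => decide (z = M)) ≤ 1 := by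
    rw [firstTerms, hsplit2, List.map_append, List.countP_append]
    have hzero : (List.map X (List.range' 4 (Lq - 3))).countP (fun z => decide (z = M)) = 0 := by
      rw [List.countP_eq_zero]
      intro z hz
      simp only [List.mem_map] at hz
      obtain ⟨j, hj, rfl⟩ := hz
      rw [List.mem_range'_1] at hj
      simp only [decide_eq_true_eq]
      exact hcon j (by omega) (by omega)
    rw [hzero]
    have hr3 : List.range' 1 3 = [1, 2, 3] := rfl
    rw [hr3]
    simp only [List.map_cons, List.map_nil, hX1, hX2, hX3, List.countP_cons, List.countP_nil]
    by_cases h0 : (0 : ℝ) = M <;> by_cases hxM : x = M <;> by_cases h1M : (1 : ℝ) = M <;>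
      simp [h0, hxM, h1M] <;> linarith
  omega
end

section
/- For each fixed n, on any interval of x-values for which the relative order (the permutation sorting the list) of (x₁, x₂, …, x_n) of the M&m sequence started from (0, x, 1) is constant, each term x_j (and each median m_j, j ≤ n) is an affine function of x with rational coefficients. -/
open Finset Filter

section congr
variable {α : Type*} (r s : α → α → Prop) [DecidableRel r] [DecidableRel s]

lemma orderedInsert_congr' (a : α) (l : List α)
    (h : ∀ b ∈ l, r a b ↔ s a b) : l.orderedInsert r a = l.orderedInsert s a := by
  induction l with
  | nil => rfl
  | cons c cs ih =>
    simp only [List.orderedInsert]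
    rcases h c (by simp) with hc
    by_cases hr : r a c
    · rw [if_pos hr, if_pos (hc.mp hr)]
    · rw [if_neg hr, if_neg (fun hs => hr (hc.mpr hs)),
        ih (fun b hb => h b (by simp [hb]))]

lemma insertionSort_congr' (l : List α)
    (h : ∀ b ∈ l, ∀ c ∈ l, r b c ↔ s b c) : l.insertionSort r = l.insertionSort s := by
  induction l with
  | nil => rfl
  | cons a as ih =>
    simp only [List.insertionSort_cons]
    rw [ih (fun b hb c hc => h b (by simp [hb]) c (by simp [hc]))]
    exact orderedInsert_congr' r s a _ (fun b hb => by
      have hb' : b ∈ as := (List.mem_insertionSort s).mp hb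
      exact h a (by simp) b (by simp [hb']))
end congr

lemma sum_affine {S : Set ℝ} (f : ℝ → ℕ → ℝ) (t : Finset ℕ)
    (h : ∀ i ∈ t, ∃ p q : ℚ, ∀ x ∈ S, f x i = (p : ℝ) * x + (q : ℝ)) :
    ∃ p q : ℚ, ∀ x ∈ S, ∑ i ∈ t, f x i = (p : ℝ) * x + (q : ℝ) := by
  classical
  induction t using Finset.induction with
  | empty => exact ⟨0, 0, fun x _ => by simp⟩
  | @insert a tt hni ih =>
    obtain ⟨p, q, hpq⟩ := h a (by simp)
    obtain ⟨P, Q, hPQ⟩ := ih (fun i hi => h i (by simp [hi]))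
    exact ⟨p + P, q + Q, fun x hx => by
      rw [Finset.sum_insert hni, hpq x hx, hPQ x hx]; push_cast; ring⟩

lemma medn_affine {n : ℕ} {S : Set ℝ} (X : ℝ → ℕ → ℝ)
    (horder : ∀ x ∈ S, ∀ y ∈ S, ∀ i j, 1 ≤ i → i ≤ n → 1 ≤ j → j ≤ n →
      (X x i ≤ X x j ↔ X y i ≤ X y j))
    (j : ℕ) (hj1 : 1 ≤ j) (hjn : j ≤ n)
    (hterms : ∀ i, 1 ≤ i → i ≤ j → ∃ p q : ℚ, ∀ x ∈ S, X x i = (p : ℝ) * x + (q : ℝ)) :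
    ∃ p q : ℚ, ∀ x ∈ S, medn (X x) j = (p : ℝ) * x + (q : ℝ) := by
  classical
  rcases Set.eq_empty_or_nonempty S with hSe | ⟨x₀, hx₀⟩
  · exact ⟨0, 0, fun x hx => absurd hx (by simp [hSe])⟩
  set idx : List ℕ := List.range' 1 j with hidx
  have hmemidx : ∀ a ∈ idx, 1 ≤ a ∧ a ≤ j := by
    intro a ha
    rw [hidx, List.mem_range'] at ha
    obtain ⟨i, hi, rfl⟩ := ha
    omega
  let r : ℝ → ℕ → ℕ → Prop := fun x a b => X x a ≤ X x b
  haveI hdec : ∀ x, DecidableRel (r x) := fun x a b => inferInstanceAs (Decidable (X x a ≤ X x b))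
  set σ : List ℕ := idx.insertionSort (r x₀) with hσ
  have hσlen : σ.length = j := by
    rw [hσ, List.length_insertionSort, hidx, List.length_range']
  have hσmem : ∀ a ∈ σ, 1 ≤ a ∧ a ≤ j := fun a ha =>
    hmemidx a ((List.mem_insertionSort _).mp ha)
  have hA : ∀ x ∈ S, (firstTerms (X x) j).insertionSort (· ≤ ·) = σ.map (X x) := by
    intro x hx
    have h1 : idx.insertionSort (r x) = σ := by
      rw [hσ]
      exact insertionSort_congr' (r x) (r x₀) idx (fun b hb c hc =>
        horder x hx x₀ hx₀ b c (hmemidx b hb).1 (le_trans (hmemidx b hb).2 hjn)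
          (hmemidx c hc).1 (le_trans (hmemidx c hc).2 hjn))
    have h2 := List.map_insertionSort (r := r x) (s := ((· ≤ ·) : ℝ → ℝ → Prop)) (X x) idx
      (fun a _ b _ => Iff.rfl)
    rw [h1] at h2
    rw [firstTerms, ← hidx, ← h2]
  have hflen : ∀ x : ℝ, (firstTerms (X x) j).length = j := by
    intro x; rw [firstTerms, List.length_map, List.length_range']
  have key : ∀ k, k < j → ∃ p q : ℚ, ∀ x ∈ S,
      ((firstTerms (X x) j).insertionSort (· ≤ ·)).getD k 0 = (p : ℝ) * x + (q : ℝ) := by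
    intro k hk
    have hk' : k < σ.length := by rw [hσlen]; exact hk
    have hmem : σ[k] ∈ σ := List.getElem_mem hk'
    obtain ⟨p, q, hpq⟩ := hterms σ[k] (hσmem _ hmem).1 (hσmem _ hmem).2
    refine ⟨p, q, fun x hx => ?_⟩
    rw [hA x hx]
    have hk'' : k < (σ.map (X x)).length := by rw [List.length_map]; exact hk'
    rw [List.getD_eq_getElem _ _ hk'', List.getElem_map]
    exact hpq x hx
  unfold medn med
  simp only [hflen]
  by_cases hpar : j % 2 = 1
  · obtain ⟨p, q, hpq⟩ := key (j / 2) (Nat.div_lt_self hj1 one_lt_two)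
    exact ⟨p, q, fun x hx => by simp only [hpar, if_pos]; exact hpq x hx⟩
  · have hj2 : 2 ≤ j := by omega
    obtain ⟨p₁, q₁, h₁⟩ := key (j / 2 - 1) (by omega)
    obtain ⟨p₂, q₂, h₂⟩ := key (j / 2) (Nat.div_lt_self hj1 one_lt_two)
    refine ⟨(p₁ + p₂) / 2, (q₁ + q₂) / 2, fun x hx => ?_⟩
    simp only [hpar, if_neg, if_false]
    rw [h₁ x hx, h₂ x hx]
    push_cast; ring

theorem terms_affine_on_constant_order (n : ℕ) (S : Set ℝ)
    (hS : S ⊆ Set.Ioo (0 : ℝ) 1)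
    (X : ℝ → ℕ → ℝ) (hX : ∀ x ∈ S, IsMnM 0 x 1 (X x))
    (horder : ∀ x ∈ S, ∀ y ∈ S, ∀ i j, 1 ≤ i → i ≤ n → 1 ≤ j → j ≤ n →
      (X x i ≤ X x j ↔ X y i ≤ X y j)) :
    ∀ j, 1 ≤ j → j ≤ n →
      (∃ p q : ℚ, ∀ x ∈ S, X x j = (p : ℝ) * x + (q : ℝ)) ∧
      (∃ p q : ℚ, ∀ x ∈ S, medn (X x) j = (p : ℝ) * x + (q : ℝ)) := by
  have A : ∀ j, 1 ≤ j → j ≤ n → ∃ p q : ℚ, ∀ x ∈ S, X x j = (p : ℝ) * x + (q : ℝ) := by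
    intro j
    induction j using Nat.strong_induction_on with
    | _ j ih =>
      intro hj1 hjn
      match j, hj1 with
      | 1, _ => exact ⟨0, 0, fun x hx => by simp [(hX x hx).1]⟩
      | 2, _ => exact ⟨1, 0, fun x hx => by simp [(hX x hx).2.1]⟩
      | 3, _ => exact ⟨0, 1, fun x hx => by simp [(hX x hx).2.2.1]⟩
      | (m + 4), _ =>
        set j := m + 4 with hjdef
        have hj4 : 4 ≤ j := by omega
        obtain ⟨pm, qm, hm⟩ := medn_affine (n := n) X horder (j - 1) (by omega) (by omega)
          (fun i hi1 hi2 => ih i (by omega) hi1 (by omega))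
        obtain ⟨ps, qs, hs⟩ := sum_affine (S := S) X (Finset.Icc 1 (j - 1)) (fun i hi => by
          rw [Finset.mem_Icc] at hi
          exact ih i (by omega) hi.1 (by omega))
        refine ⟨(j : ℚ) * pm - ps, (j : ℚ) * qm - qs, fun x hx => ?_⟩
        rw [(hX x hx).2.2.2 j hj4, hm x hx, hs x hx]
        push_cast; ring
  intro j hj1 hjn
  exact ⟨A j hj1 hjn, medn_affine (n := n) X horder j hj1 hjn
    (fun i hi1 hi2 => A i hi1 (le_trans hi2 hjn))⟩
end
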